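/- Let t ≥ 0 and let V = (ξ⁻, ξ⁺) be a connected component of the superlevel set A_t = { x ∈ ℝ : B(x) > t }. Then ξ⁻ and ξ⁺ are finite irrational numbers and B(ξ⁻) = B(ξ⁺) = t. -/

import Mathlib

open scoped ENNReal Topology
open scoped goldenRatio

noncomputable def gaussIter (x : ℝ) : ℕ → ℝ
  | 0 => Int.fract x
  | n + 1 => Int.fract (gaussIter x n)⁻¹

noncomputable def pquot (x : ℝ) : ℕ → ℤ
  | 0 => ⌊x⌋
  | n + 1 => ⌊(gaussIter x n)⁻¹⌋

noncomputable def qden (x : ℝ) : ℕ → ℤ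
  | 0 => 1
  | 1 => pquot x 1
  | n + 2 => pquot x (n + 2) * qden x (n + 1) + qden x n

noncomputable def pnum (x : ℝ) : ℕ → ℤ
  | 0 => pquot x 0
  | 1 => pquot x 1 * pquot x 0 + 1
  | n + 2 => pquot x (n + 2) * pnum x (n + 1) + pnum x n

noncomputable def brjunoTerm (x : ℝ) (k : ℕ) : ℝ :=
  Real.log (pquot x (k + 1)) / (qden x k : ℝ)

open Classical in
noncomputable def brjuno (x : ℝ) : ℝ≥0∞ :=
  if Irrational x then ∑' k, ENNReal.ofReal (brjunoTerm x k) else ⊤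

noncomputable def brjunoTailE (x : ℝ) (n : ℕ) : ℝ≥0∞ :=
  ∑' k, ENNReal.ofReal (brjunoTerm x (n + k))

noncomputable def cfLen (x : ℝ) : ℕ := sInf {n | gaussIter x n = 0}

noncomputable def brjunoFinite (x : ℝ) : ℝ :=
  ∑ k ∈ Finset.range (cfLen x), Real.log (pquot x (k + 1)) / (qden x k : ℝ)

def brjunoSuper (t : ℝ) : Set ℝ := {x | ENNReal.ofReal t < brjuno x}

def IsCompOf (A : Set ℝ) (a b : ℝ) : Prop := ∃ x ∈ A, connectedComponentIn A x = Set.Ioo a b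

def diamond (κ a b : ℝ) : Set ℂ :=
  {z : ℂ | a < z.re ∧ z.re < b ∧ |z.im| ≤ κ * min (z.re - a) (b - z.re)}

noncomputable def CMset (κ M : ℝ) : Set ℂ :=
  (fun ξ : ℂ => Complex.exp (2 * Real.pi * Complex.I * ξ)) ''
    (⋃ (a : ℝ) (b : ℝ) (_ : IsCompOf (brjunoSuper M) a b), diamond κ a b)ᶜ ∪ {0}


section Basics

theorem irrational_fract {x : ℝ} (hx : Irrational x) : Irrational (Int.fract x) := by
  rw [← Int.self_sub_floor]; exact hx.sub_intCast ⌊x⌋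

theorem irrational_of_fract {x : ℝ} (hx : Irrational (Int.fract x)) : Irrational x := by
  rw [← Int.self_sub_floor] at hx; exact Irrational.of_sub_intCast _ hx

theorem fract_pos_of_irrational {x : ℝ} (hx : Irrational x) : 0 < Int.fract x := by
  rcases lt_or_eq_of_le (Int.fract_nonneg x) with h | h
  · exact h
  · exact absurd ((irrational_fract hx)) (by rw [← h]; exact not_irrational_zero)

theorem irrational_gauss {x : ℝ} (hx : Irrational x) (n : ℕ) : Irrational (gaussIter x n) := by
  induction n with
  | zero => exact irrational_fract hx
  | succ n ih => exact irrational_fract ih.inv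

theorem gauss_pos {x : ℝ} (hx : Irrational x) (n : ℕ) : 0 < gaussIter x n := by
  cases n with
  | zero => exact fract_pos_of_irrational hx
  | succ n => exact fract_pos_of_irrational (irrational_gauss hx n).inv

theorem gauss_lt_one {x : ℝ} (hx : Irrational x) (n : ℕ) : gaussIter x n < 1 := by
  cases n with
  | zero => exact Int.fract_lt_one x
  | succ n => exact Int.fract_lt_one _

theorem one_lt_gauss_inv {x : ℝ} (hx : Irrational x) (n : ℕ) : 1 < (gaussIter x n)⁻¹ :=
  (one_lt_inv₀ (gauss_pos hx n)).mpr (gauss_lt_one hx n)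

theorem pquot_pos {x : ℝ} (hx : Irrational x) (n : ℕ) : 1 ≤ pquot x (n + 1) := by
  have := one_lt_gauss_inv hx n
  show (1 : ℤ) ≤ ⌊(gaussIter x n)⁻¹⌋
  exact Int.le_floor.mpr (by exact_mod_cast this.le)

theorem gaussIter_succ_eq (x : ℝ) (n : ℕ) :
    gaussIter x (n + 1) = gaussIter (Int.fract x)⁻¹ n := by
  induction n with
  | zero => rfl
  | succ n ih => show Int.fract (gaussIter x (n+1))⁻¹ = _; rw [ih]; rfl

theorem pquot_succ_eq (x : ℝ) (n : ℕ) :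
    pquot x (n + 1) = pquot (Int.fract x)⁻¹ n := by
  cases n with
  | zero => rfl
  | succ n => show ⌊(gaussIter x (n+1))⁻¹⌋ = _; rw [gaussIter_succ_eq]; rfl

theorem irrational_of_gauss {y : ℝ} (n : ℕ) (h : Irrational (gaussIter y n)) : Irrational y := by
  induction n generalizing y with
  | zero => exact irrational_of_fract h
  | succ n ih =>
    rw [gaussIter_succ_eq] at h
    exact irrational_of_fract (ih h).of_inv

end Basics

noncomputable def qq (x : ℝ) : ℕ → ℤ
  | 0 => 0
  | 1 => 1
  | n + 2 => pquot x (n + 1) * qq x (n + 1) + qq x n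

noncomputable def pp (x : ℝ) : ℕ → ℤ
  | 0 => 1
  | 1 => pquot x 0
  | n + 2 => pquot x (n + 1) * pp x (n + 1) + pp x n

theorem qden_eq_qq (x : ℝ) : ∀ n, qden x n = qq x (n + 1)
  | 0 => by simp [qden, qq]
  | 1 => by simp [qden, qq]
  | n + 2 => by
    rw [qden, qq, qden_eq_qq x (n+1), qden_eq_qq x n]

theorem qq_nonneg {x : ℝ} (hx : Irrational x) : ∀ n, 0 ≤ qq x n ∧ qq x n ≤ qq x (n + 1) ∧ 1 ≤ qq x (n + 1)
  | 0 => by simp [qq]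
  | n + 1 => by
    obtain ⟨h0, h1, h2⟩ := qq_nonneg hx n
    refine ⟨by linarith, ?_, ?_⟩
    · rw [qq]
      nlinarith [pquot_pos hx n]
    · rw [qq]
      nlinarith [pquot_pos hx n]

theorem qq_ge {x : ℝ} (hx : Irrational x) : ∀ n : ℕ, (n : ℤ) ≤ qq x (n + 1)
  | 0 => by simp [qq]
  | 1 => by simpa [qq] using pquot_pos hx 0
  | n + 2 => by
    have h1 := qq_ge hx (n + 1)
    have h2 := (qq_nonneg hx (n + 1)).2.2
    have h3 := (qq_nonneg hx n).2.2
    show (_ : ℤ) ≤ pquot x (n + 2) * qq x (n + 2) + qq x (n + 1)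
    push_cast
    push_cast at h1
    nlinarith [pquot_pos hx (n + 1)]

theorem cf_det (x : ℝ) : ∀ n, pp x n * qq x (n + 1) - pp x (n + 1) * qq x n = (-1) ^ n
  | 0 => by simp [pp, qq]
  | n + 1 => by
    have := cf_det x n
    show pp x (n+1) * (pquot x (n+1) * qq x (n+1) + qq x n)
        - (pquot x (n+1) * pp x (n+1) + pp x n) * qq x (n+1) = (-1)^(n+1)
    ring_nf
    ring_nf at this
    linarith [this]

theorem cf_identity {x : ℝ} (hx : Irrational x) :
    ∀ n, x * (qq x (n + 1) + qq x n * gaussIter x n)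
      = pp x (n + 1) + pp x n * gaussIter x n
  | 0 => by
    show x * (((1:ℤ):ℝ) + ((0:ℤ):ℝ) * _) = ((⌊x⌋:ℤ):ℝ) + ((1:ℤ):ℝ) * Int.fract x
    push_cast
    rw [← Int.self_sub_floor]
    ring
  | n + 1 => by
    have ih := cf_identity hx n
    have hg := gauss_pos hx n
    have hgne : gaussIter x n ≠ 0 := ne_of_gt hg
    have hgs : gaussIter x (n + 1) = (gaussIter x n)⁻¹ - pquot x (n + 1) := by
      show Int.fract (gaussIter x n)⁻¹ = _
      rw [Int.fract]; rfl
    show x * (((pquot x (n+1) * qq x (n+1) + qq x n : ℤ) : ℝ) + (qq x (n+1) : ℝ) * gaussIter x (n+1))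
      = ((pquot x (n+1) * pp x (n+1) + pp x n : ℤ) : ℝ) + (pp x (n+1) : ℝ) * gaussIter x (n+1)
    rw [hgs]
    push_cast
    field_simp
    push_cast at ih
    nlinarith [ih]

theorem congr_qq_pp {x y : ℝ} {n : ℕ} (h : ∀ k ≤ n, pquot x k = pquot y k) :
    ∀ m ≤ n + 1, qq x m = qq y m ∧ pp x m = pp y m := by
  intro m hm
  induction m using Nat.strong_induction_on with
  | _ m ih =>
    match m, hm with
    | 0, _ => simp [qq, pp]
    | 1, _ => simpa [qq, pp] using h 0 (Nat.zero_le n)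
    | (m + 2), hm => ?_
    have h1 := ih (m + 1) (by omega) (by omega)
    have h0 := ih m (by omega) (by omega)
    have hp : pquot x (m + 1) = pquot y (m + 1) := h (m + 1) (by omega)
    constructor
    · show pquot x (m+1) * qq x (m+1) + qq x m = pquot y (m+1) * qq y (m+1) + qq y m
      rw [hp, h1.1, h0.1]
    · show pquot x (m+1) * pp x (m+1) + pp x m = pquot y (m+1) * pp y (m+1) + pp y m
      rw [hp, h1.2, h0.2]

-- denominators positive as reals
theorem den_pos {x : ℝ} (hx : Irrational x) (n : ℕ) {g : ℝ} (hg : 0 < g) :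
    0 < (qq x (n + 1) : ℝ) + (qq x n : ℝ) * g := by
  have h1 := (qq_nonneg hx n).2.2
  have h0 := (qq_nonneg hx n).1
  have : (1 : ℝ) ≤ (qq x (n + 1) : ℝ) := by exact_mod_cast h1
  have : (0 : ℝ) ≤ (qq x n : ℝ) := by exact_mod_cast h0
  nlinarith

theorem sub_formula {x y : ℝ} (hx : Irrational x) (hy : Irrational y) (n : ℕ)
    (h : ∀ k ≤ n, pquot x k = pquot y k) :
    x - y = (-1) ^ n * (gaussIter x n - gaussIter y n) /
      (((qq x (n + 1) : ℝ) + (qq x n : ℝ) * gaussIter x n)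
        * ((qq x (n + 1) : ℝ) + (qq x n : ℝ) * gaussIter y n)) := by
  have hqx := cf_identity hx n
  have hqy := cf_identity hy n
  obtain ⟨e1, e2⟩ := congr_qq_pp h (n + 1) le_rfl
  obtain ⟨e3, e4⟩ := congr_qq_pp h n (by omega)
  rw [← e1, ← e3] at hqy
  rw [← e2, ← e4] at hqy
  have dx := den_pos hx n (gauss_pos hx n)
  have dy := den_pos hx n (gauss_pos hy n)
  have det := cf_det x n
  have detR : (pp x n : ℝ) * (qq x (n+1) : ℝ) - (pp x (n+1) : ℝ) * (qq x n : ℝ) = (-1) ^ n := by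
    exact_mod_cast det
  set gx := gaussIter x n with hgx
  set gy := gaussIter y n with hgy
  set A := (qq x (n + 1) : ℝ) with hA
  set B := (qq x n : ℝ) with hB
  set P := (pp x (n + 1) : ℝ) with hP
  set Q := (pp x n : ℝ) with hQ
  have hx2 : x = (P + Q * gx) / (A + B * gx) := (eq_div_iff dx.ne').mpr hqx
  have hy2 : y = (P + Q * gy) / (A + B * gy) := (eq_div_iff dy.ne').mpr hqy
  rw [hx2, hy2, div_sub_div _ _ dx.ne' dy.ne']
  congr 1
  linear_combination (gx - gy) * detR

theorem exists_same_digits {x : ℝ} (hx : Irrational x) (n : ℕ) {g : ℝ} (hg0 : 0 < g) (hg1 : g < 1) :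
    ∃ y : ℝ, (∀ k ≤ n, pquot y k = pquot x k) ∧ gaussIter y n = g ∧ 0 < Int.fract y := by
  induction n generalizing x g with
  | zero =>
    refine ⟨(⌊x⌋ : ℝ) + g, ?_, ?_, ?_⟩
    · intro k hk
      interval_cases k
      show ⌊(⌊x⌋ : ℝ) + g⌋ = ⌊x⌋
      rw [Int.floor_intCast_add]
      simp [Int.floor_eq_zero_iff.mpr ⟨hg0.le, hg1⟩]
    · show Int.fract ((⌊x⌋ : ℝ) + g) = g
      rw [Int.fract_intCast_add, Int.fract_eq_self.mpr ⟨hg0.le, hg1⟩]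
    · show 0 < Int.fract ((⌊x⌋ : ℝ) + g)
      rw [Int.fract_intCast_add, Int.fract_eq_self.mpr ⟨hg0.le, hg1⟩]; exact hg0
  | succ n ih =>
    have hfx : Irrational (Int.fract x) := by
      rw [← Int.self_sub_floor]; exact hx.sub_intCast ⌊x⌋
    have hx' : Irrational (Int.fract x)⁻¹ := hfx.inv
    obtain ⟨y', hy'd, hy'g, hy'f⟩ := ih hx' hg0 hg1
    have hy'1 : 1 < y' := by
      have hfl : ⌊y'⌋ = pquot (Int.fract x)⁻¹ 0 := hy'd 0 (Nat.zero_le n)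
      have : (1 : ℤ) ≤ ⌊y'⌋ := by
        rw [hfl]
        show (1:ℤ) ≤ ⌊(Int.fract x)⁻¹⌋
        refine Int.le_floor.mpr ?_
        push_cast
        exact ((one_lt_inv₀ (fract_pos_of_irrational hx)).mpr (Int.fract_lt_one x)).le
      have h2 : ((1:ℤ):ℝ) ≤ (⌊y'⌋ : ℝ) := by exact_mod_cast this
      have := Int.floor_le y'
      have hfr := Int.self_sub_floor y' ▸ hy'f
      push_cast at h2
      nlinarith [hy'f, Int.self_sub_floor y']
    refine ⟨(⌊x⌋ : ℝ) + y'⁻¹, ?_, ?_, ?_⟩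
    · have hinv0 : 0 < y'⁻¹ := inv_pos.mpr (lt_trans one_pos hy'1)
      have hinv1 : y'⁻¹ < 1 := inv_lt_one_of_one_lt₀ hy'1
      have hfr : Int.fract ((⌊x⌋ : ℝ) + y'⁻¹) = y'⁻¹ := by
        rw [Int.fract_intCast_add, Int.fract_eq_self.mpr ⟨hinv0.le, hinv1⟩]
      intro k hk
      cases k with
      | zero =>
        show ⌊(⌊x⌋ : ℝ) + y'⁻¹⌋ = ⌊x⌋
        rw [Int.floor_intCast_add]
        simp [Int.floor_eq_zero_iff.mpr ⟨hinv0.le, hinv1⟩]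
      | succ k =>
        rw [pquot_succ_eq, hfr, inv_inv, hy'd k (by omega), ← pquot_succ_eq]
    · have hinv0 : 0 < y'⁻¹ := inv_pos.mpr (lt_trans one_pos hy'1)
      have hinv1 : y'⁻¹ < 1 := inv_lt_one_of_one_lt₀ hy'1
      rw [gaussIter_succ_eq, Int.fract_intCast_add, Int.fract_eq_self.mpr ⟨hinv0.le, hinv1⟩, inv_inv]
      exact hy'g
    · have hinv0 : 0 < y'⁻¹ := inv_pos.mpr (lt_trans one_pos hy'1)
      have hinv1 : y'⁻¹ < 1 := inv_lt_one_of_one_lt₀ hy'1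
      rw [Int.fract_intCast_add, Int.fract_eq_self.mpr ⟨hinv0.le, hinv1⟩]
      exact hinv0

section Golden

theorem grc_pos : 0 < φ⁻¹ := inv_pos.mpr Real.goldenRatio_pos
theorem grc_lt_one : φ⁻¹ < 1 := inv_lt_one_of_one_lt₀ Real.one_lt_goldenRatio
theorem grc_inv : (φ⁻¹)⁻¹ = 1 + φ⁻¹ := by
  rw [inv_inv, Real.inv_goldenRatio]
  linarith [Real.one_sub_goldenRatio]
theorem grc_irrational : Irrational φ⁻¹ := Real.goldenRatio_irrational.inv

theorem fract_one_add_grc : Int.fract (1 + φ⁻¹) = φ⁻¹ := by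
  rw [show (1 : ℝ) + φ⁻¹ = ((1 : ℤ) : ℝ) + φ⁻¹ by norm_num, Int.fract_intCast_add,
    Int.fract_eq_self.mpr ⟨grc_pos.le, grc_lt_one⟩]

end Golden

set_option maxHeartbeats 1000000 in
theorem key_lemma {ξ : ℝ} (hξ : Irrational ξ) (n : ℕ) (hn : 1 ≤ n) :
    ∃ y : ℝ, Irrational y ∧ |y - ξ| ≤ 1 / n ∧
      (Odd n → ξ < y) ∧ (Even n → y < ξ) ∧
      brjuno y ≤ brjuno ξ + ENNReal.ofReal (Real.log 2 / n) := by
  set a := pquot ξ (n + 1) with ha_def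
  have ha : 1 ≤ a := pquot_pos hξ n
  have haR : (1 : ℝ) ≤ (a : ℝ) := by exact_mod_cast ha
  set g : ℝ := ((a : ℝ) + 1 + φ⁻¹)⁻¹ with hg_def
  have hden : (1 : ℝ) < (a : ℝ) + 1 + φ⁻¹ := by nlinarith [grc_pos]
  have hg0 : 0 < g := inv_pos.mpr (lt_trans one_pos hden)
  have hg1 : g < 1 := inv_lt_one_of_one_lt₀ hden
  obtain ⟨y, hyd, hyg, -⟩ := exists_same_digits hξ n hg0 hg1
  have hginv : g⁻¹ = ((a + 1 : ℤ) : ℝ) + φ⁻¹ := by rw [hg_def, inv_inv]; push_cast; ring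
  -- gaussIter y (n+1) = φ⁻¹
  have hy_gauss_succ : gaussIter y (n + 1) = φ⁻¹ := by
    show Int.fract (gaussIter y n)⁻¹ = φ⁻¹
    rw [hyg, hginv, Int.fract_intCast_add, Int.fract_eq_self.mpr ⟨grc_pos.le, grc_lt_one⟩]
  have hy_irr : Irrational y := irrational_of_gauss (n + 1) (hy_gauss_succ ▸ grc_irrational)
  -- pquot y (n+1) = a + 1
  have hpq_succ : pquot y (n + 1) = a + 1 := by
    show ⌊(gaussIter y n)⁻¹⌋ = a + 1
    rw [hyg, hginv, Int.floor_intCast_add, Int.floor_eq_zero_iff.mpr ⟨grc_pos.le, grc_lt_one⟩, add_zero]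
  -- tail is golden
  have htail : ∀ j, gaussIter y (n + 1 + j) = φ⁻¹ := by
    intro j
    induction j with
    | zero => exact hy_gauss_succ
    | succ j ih =>
      show Int.fract (gaussIter y (n + 1 + j))⁻¹ = φ⁻¹
      rw [ih, grc_inv, fract_one_add_grc]
  have hpq_tail : ∀ m, n + 2 ≤ m → pquot y m = 1 := by
    intro m hm
    obtain ⟨j, rfl⟩ : ∃ j, m = (n + 1 + j) + 1 := ⟨m - n - 2, by omega⟩
    show ⌊(gaussIter y (n + 1 + j))⁻¹⌋ = 1
    rw [htail j, grc_inv]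
    rw [show (1 : ℝ) + φ⁻¹ = ((1 : ℤ) : ℝ) + φ⁻¹ by norm_num, Int.floor_intCast_add,
      Int.floor_eq_zero_iff.mpr ⟨grc_pos.le, grc_lt_one⟩, add_zero]
  -- qq / qden agreement
  have hcongr := congr_qq_pp hyd
  have hqden : ∀ k ≤ n, qden y k = qden ξ k := by
    intro k hk
    rw [qden_eq_qq, qden_eq_qq]
    exact (hcongr (k + 1) (by omega)).1
  -- brjuno y is a finite sum
  have hterm_zero : ∀ k, n + 1 ≤ k → ENNReal.ofReal (brjunoTerm y k) = 0 := by
    intro k hk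
    have : pquot y (k + 1) = 1 := hpq_tail (k + 1) (by omega)
    simp [brjunoTerm, this]
  have hby : brjuno y = ∑ k ∈ Finset.range (n + 1), ENNReal.ofReal (brjunoTerm y k) := by
    rw [brjuno, if_pos hy_irr]
    exact tsum_eq_sum (fun k hk => hterm_zero k (by
      simp only [Finset.mem_range] at hk; omega))
  -- terms below n agree with ξ
  have hterm_eq : ∀ k < n, brjunoTerm y k = brjunoTerm ξ k := by
    intro k hk
    rw [brjunoTerm, brjunoTerm, hyd (k + 1) (by omega), hqden k (by omega)]
  -- the n-th term
  have hqdn_pos : (n : ℝ) ≤ (qden ξ n : ℝ) := by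
    rw [qden_eq_qq]
    exact_mod_cast qq_ge hξ n
  have hnR : (1 : ℝ) ≤ (n : ℝ) := by exact_mod_cast hn
  have hqdn_pos' : (0 : ℝ) < (qden ξ n : ℝ) := lt_of_lt_of_le (by linarith) hqdn_pos
  have hterm_n : brjunoTerm y n = Real.log ((a : ℝ) + 1) / (qden ξ n : ℝ) := by
    rw [brjunoTerm, hpq_succ, hqden n le_rfl]
    push_cast
    ring_nf
  have hterm_n_le : ENNReal.ofReal (brjunoTerm y n)
      ≤ ENNReal.ofReal (brjunoTerm ξ n) + ENNReal.ofReal (Real.log 2 / n) := by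
    rw [hterm_n]
    have hlog : Real.log ((a : ℝ) + 1) ≤ Real.log (a : ℝ) + Real.log 2 := by
      rw [← Real.log_mul (by linarith) (by norm_num)]
      exact Real.log_le_log (by linarith) (by nlinarith)
    have h1 : Real.log ((a : ℝ) + 1) / (qden ξ n : ℝ)
        ≤ Real.log (a : ℝ) / (qden ξ n : ℝ) + Real.log 2 / (n : ℝ) := by
      have h2 : Real.log 2 / (qden ξ n : ℝ) ≤ Real.log 2 / (n : ℝ) :=
        div_le_div_of_nonneg_left (Real.log_nonneg (by norm_num)) (by linarith) hqdn_pos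
      have h3 : Real.log ((a : ℝ) + 1) / (qden ξ n : ℝ)
          ≤ (Real.log (a : ℝ) + Real.log 2) / (qden ξ n : ℝ) := by gcongr
      rw [add_div] at h3
      linarith
    calc ENNReal.ofReal (Real.log ((a : ℝ) + 1) / (qden ξ n : ℝ))
        ≤ ENNReal.ofReal (Real.log (a : ℝ) / (qden ξ n : ℝ) + Real.log 2 / (n : ℝ)) :=
          ENNReal.ofReal_le_ofReal h1
      _ = ENNReal.ofReal (brjunoTerm ξ n) + ENNReal.ofReal (Real.log 2 / (n : ℝ)) := by
          rw [ENNReal.ofReal_add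
            (div_nonneg (Real.log_nonneg haR) hqdn_pos'.le)
            (div_nonneg (Real.log_nonneg (by norm_num)) (by linarith))]
          rfl
  -- assemble the brjuno bound
  have hbound : brjuno y ≤ brjuno ξ + ENNReal.ofReal (Real.log 2 / n) := by
    rw [hby, Finset.sum_range_succ]
    have hsum_eq : ∑ k ∈ Finset.range n, ENNReal.ofReal (brjunoTerm y k)
        = ∑ k ∈ Finset.range n, ENNReal.ofReal (brjunoTerm ξ k) := by
      refine Finset.sum_congr rfl fun k hk => ?_
      rw [hterm_eq k (Finset.mem_range.mp hk)]
    rw [hsum_eq]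
    calc ∑ k ∈ Finset.range n, ENNReal.ofReal (brjunoTerm ξ k) + ENNReal.ofReal (brjunoTerm y n)
        ≤ ∑ k ∈ Finset.range n, ENNReal.ofReal (brjunoTerm ξ k)
          + (ENNReal.ofReal (brjunoTerm ξ n) + ENNReal.ofReal (Real.log 2 / n)) := by
          exact add_le_add_right hterm_n_le _
      _ = ∑ k ∈ Finset.range (n+1), ENNReal.ofReal (brjunoTerm ξ k)
          + ENNReal.ofReal (Real.log 2 / n) := by
          rw [Finset.sum_range_succ, add_assoc]
      _ ≤ brjuno ξ + ENNReal.ofReal (Real.log 2 / n) := by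
          refine add_le_add_left ?_ _
          rw [brjuno, if_pos hξ]
          exact ENNReal.sum_le_tsum _
  -- geometry: position of y relative to ξ
  have hsub := sub_formula hy_irr hξ n hyd
  rw [hyg] at hsub
  set gξ := gaussIter ξ n with hgξ
  have hgξ0 : 0 < gξ := gauss_pos hξ n
  have hgξ1 : gξ < 1 := gauss_lt_one hξ n
  have hglt : g < gξ := by
    have h1 : gaussIter ξ (n + 1) = gξ⁻¹ - (a : ℝ) := by
      show Int.fract gξ⁻¹ = _
      rw [Int.fract, ha_def]; rfl
    have h2 : gξ⁻¹ < (a : ℝ) + 1 := by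
      have := gauss_lt_one hξ (n + 1)
      rw [h1] at this; linarith
    have h3 : gξ⁻¹ < g⁻¹ := by
      rw [hg_def, inv_inv]
      nlinarith [grc_pos]
    have h5 := inv_strictAnti₀ (inv_pos.mpr hgξ0) h3
    simpa using h5
  have hA : (qq y (n + 1) : ℝ) = (qq ξ (n + 1) : ℝ) := by
    exact_mod_cast (hcongr (n + 1) le_rfl).1
  have hAn : (n : ℝ) ≤ (qq y (n + 1) : ℝ) := by
    rw [hA]; exact_mod_cast qq_ge hξ n
  have hB0 : (0 : ℝ) ≤ (qq y n : ℝ) := by exact_mod_cast (qq_nonneg hy_irr n).1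
  have hD1 : 0 < (qq y (n + 1) : ℝ) + (qq y n : ℝ) * g := den_pos hy_irr n hg0
  have hD2 : 0 < (qq y (n + 1) : ℝ) + (qq y n : ℝ) * gξ := den_pos hy_irr n hgξ0
  have hD1n : (n : ℝ) ≤ (qq y (n + 1) : ℝ) + (qq y n : ℝ) * g := by nlinarith
  have hD21 : (1 : ℝ) ≤ (qq y (n + 1) : ℝ) + (qq y n : ℝ) * gξ := by
    have : (1 : ℝ) ≤ (qq y (n+1) : ℝ) := by exact_mod_cast (qq_nonneg hy_irr n).2.2
    nlinarith
  refine ⟨y, hy_irr, ?_, ?_, ?_, hbound⟩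
  · -- |y - ξ| ≤ 1/n
    have h6 : |y - ξ| = |g - gξ| /
        (((qq y (n + 1) : ℝ) + (qq y n : ℝ) * g) * ((qq y (n + 1) : ℝ) + (qq y n : ℝ) * gξ)) := by
      rw [hsub, abs_div, abs_mul, abs_pow, abs_neg, abs_one, one_pow, one_mul,
        abs_of_pos (mul_pos hD1 hD2)]
    have habs : |g - gξ| ≤ 1 := abs_le.mpr ⟨by nlinarith, by nlinarith⟩
    have hDD : (n : ℝ) ≤ ((qq y (n + 1) : ℝ) + (qq y n : ℝ) * g)
        * ((qq y (n + 1) : ℝ) + (qq y n : ℝ) * gξ) := by nlinarith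
    rw [h6]
    exact div_le_div₀ zero_le_one habs (by linarith) hDD
  · -- odd case
    intro hodd
    rw [← sub_pos, hsub, hodd.neg_one_pow]
    apply div_pos <;> nlinarith
  · -- even case
    intro heven
    rw [← sub_neg, hsub, heven.neg_one_pow]
    apply div_neg_of_neg_of_pos
    · nlinarith
    · nlinarith

theorem endpoint_eq {t ξm ξp ξ : ℝ} (hlt : ξm < ξp) (hξ : Irrational ξ)
    (hξmem : ξ = ξm ∨ ξ = ξp)
    (hsub : Set.Ioo ξm ξp ⊆ brjunoSuper t) (hle : brjuno ξ ≤ ENNReal.ofReal t) :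
    brjuno ξ = ENNReal.ofReal t := by
  refine le_antisymm hle (not_lt.mp fun hstrict => ?_)
  set ε := ENNReal.ofReal t - brjuno ξ with hε
  have hfin : brjuno ξ ≠ ⊤ := ne_top_of_le_ne_top ENNReal.ofReal_ne_top hle
  have hεpos : 0 < ε := tsub_pos_of_lt hstrict
  have hεtop : ε ≠ ⊤ := ne_top_of_le_ne_top ENNReal.ofReal_ne_top tsub_le_self
  have hεr : 0 < ε.toReal := ENNReal.toReal_pos hεpos.ne' hεtop
  obtain ⟨N, hN⟩ := exists_nat_gt (max (Real.log 2 / ε.toReal) (1 / (ξp - ξm)))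
  have hN1 : Real.log 2 / ε.toReal < (N : ℝ) := lt_of_le_of_lt (le_max_left _ _) hN
  have hN2 : 1 / (ξp - ξm) < (N : ℝ) := lt_of_le_of_lt (le_max_right _ _) hN
  have hNpos : (0 : ℝ) < N := lt_of_le_of_lt (div_pos one_pos (sub_pos.mpr hlt)).le hN2
  -- choose n with right parity
  obtain ⟨n, hn1, hNn, hpar⟩ : ∃ n : ℕ, 1 ≤ n ∧ (N : ℝ) ≤ (n : ℝ) ∧
      ((ξ = ξm → Odd n) ∧ (ξ = ξp → Even n)) := by
    rcases hξmem with h | h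
    · exact ⟨2 * N + 1, by omega, by push_cast; linarith, fun _ => ⟨N, by ring⟩,
        fun hp => absurd (h ▸ hp) (by intro he; exact absurd (he ▸ hlt) (lt_irrefl _))⟩
    · exact ⟨2 * N + 2, by omega, by push_cast; linarith,
        fun hm => absurd (h ▸ hm) (by intro he; exact absurd (he ▸ hlt) (lt_irrefl _)),
        fun _ => ⟨N + 1, by ring⟩⟩
  have hnpos : (0 : ℝ) < n := lt_of_lt_of_le hNpos hNn
  obtain ⟨y, hy_irr, hy_dist, hy_odd, hy_even, hy_brjuno⟩ := key_lemma hξ n hn1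
  -- 1/n < ξp - ξm
  have hgap : 1 / (n : ℝ) < ξp - ξm := by
    rw [div_lt_iff₀ hnpos]
    rw [div_lt_iff₀ (by linarith : (0:ℝ) < ξp - ξm)] at hN2
    nlinarith
  -- y is inside the interval
  have hy_mem : y ∈ Set.Ioo ξm ξp := by
    rcases hξmem with h | h
    · subst h
      have h1 : ξ < y := hy_odd (hpar.1 rfl)
      have h2 : y - ξ ≤ 1 / n := le_trans (le_abs_self _) hy_dist
      exact ⟨h1, by linarith⟩
    · subst h
      have h1 : y < ξ := hy_even (hpar.2 rfl)
      have h2 : ξ - y ≤ 1 / n := by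
        have := neg_abs_le (y - ξ)
        have := hy_dist
        have h3 : |y - ξ| = |ξ - y| := abs_sub_comm _ _
        rw [h3] at hy_dist
        exact le_trans (le_abs_self _) hy_dist
      exact ⟨by linarith, h1⟩
  have hy_super : ENNReal.ofReal t < brjuno y := hsub hy_mem
  -- small error term
  have hsmall : ENNReal.ofReal (Real.log 2 / n) < ε := by
    rw [ENNReal.ofReal_lt_iff_lt_toReal (by positivity) hεtop]
    rw [div_lt_iff₀ hεr] at hN1
    rw [div_lt_iff₀ hnpos]
    nlinarith
  have : brjuno y < ENNReal.ofReal t := by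
    calc brjuno y ≤ brjuno ξ + ENNReal.ofReal (Real.log 2 / n) := hy_brjuno
      _ < brjuno ξ + ε := ENNReal.add_lt_add_left hfin hsmall
      _ = ENNReal.ofReal t := add_tsub_cancel_of_le hle
  exact absurd (lt_trans hy_super this) (lt_irrefl _)

/-- the endpoints of a connected component of the superlevel set
`A_t = {x | B(x) > t}` are irrational and the Brjuno function takes the value `t` there. -/
theorem statement5 (t : ℝ) (ht : 0 ≤ t) (ξm ξp : ℝ)
    (hcomp : ∃ x ∈ brjunoSuper t,
      connectedComponentIn (brjunoSuper t) x = Set.Ioo ξm ξp) :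
    Irrational ξm ∧ Irrational ξp ∧
      brjuno ξm = ENNReal.ofReal t ∧ brjuno ξp = ENNReal.ofReal t := by
  obtain ⟨x0, hx0, hconn⟩ := hcomp
  have hIoo_sub : Set.Ioo ξm ξp ⊆ brjunoSuper t := by
    rw [← hconn]; exact connectedComponentIn_subset _ _
  have hx0mem : x0 ∈ Set.Ioo ξm ξp := by
    rw [← hconn]; exact mem_connectedComponentIn hx0
  have hlt : ξm < ξp := lt_trans hx0mem.1 hx0mem.2
  have hm_not : ξm ∉ brjunoSuper t := by
    intro h
    have hIco : Set.Ico ξm ξp ⊆ brjunoSuper t := by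
      intro z hz
      rcases eq_or_lt_of_le hz.1 with he | hl
      · exact he ▸ h
      · exact hIoo_sub ⟨hl, hz.2⟩
    have h2 : Set.Ico ξm ξp ⊆ connectedComponentIn (brjunoSuper t) x0 :=
      isPreconnected_Ico.subset_connectedComponentIn ⟨hx0mem.1.le, hx0mem.2⟩ hIco
    rw [hconn] at h2
    exact absurd (h2 ⟨le_rfl, hlt⟩).1 (lt_irrefl _)
  have hp_not : ξp ∉ brjunoSuper t := by
    intro h
    have hIoc : Set.Ioc ξm ξp ⊆ brjunoSuper t := by
      intro z hz
      rcases eq_or_lt_of_le hz.2 with he | hl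
      · exact he ▸ h
      · exact hIoo_sub ⟨hz.1, hl⟩
    have h2 : Set.Ioc ξm ξp ⊆ connectedComponentIn (brjunoSuper t) x0 :=
      isPreconnected_Ioc.subset_connectedComponentIn ⟨hx0mem.1, hx0mem.2.le⟩ hIoc
    rw [hconn] at h2
    exact absurd (h2 ⟨hlt, le_rfl⟩).2 (lt_irrefl _)
  have hm_le : brjuno ξm ≤ ENNReal.ofReal t := not_lt.mp hm_not
  have hp_le : brjuno ξp ≤ ENNReal.ofReal t := not_lt.mp hp_not
  have hm_irr : Irrational ξm := by
    by_contra h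
    have : brjuno ξm = ⊤ := by rw [brjuno, if_neg h]
    rw [this] at hm_le
    exact ENNReal.ofReal_ne_top (top_le_iff.mp hm_le)
  have hp_irr : Irrational ξp := by
    by_contra h
    have : brjuno ξp = ⊤ := by rw [brjuno, if_neg h]
    rw [this] at hp_le
    exact ENNReal.ofReal_ne_top (top_le_iff.mp hp_le)
  exact ⟨hm_irr, hp_irr,
    endpoint_eq hlt hm_irr (Or.inl rfl) hIoo_sub hm_le,
    endpoint_eq hlt hp_irr (Or.inr rfl) hIoo_sub hp_le⟩
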